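/- Let F_{μν} and f_{μν} be real antisymmetric 4×4 matrices, k ∈ ℝ⁴, and let L_F, L_{FF} be real numbers with L_F ≠ 0. Set ξ := F^{αβ} f_{αβ} and assume ξ ≠ 0. Suppose the discontinuity relations of a nonlinear electrodynamics L = L(F) hold: L_F f^{μν} k_ν + 2 L_{FF} ξ F^{μν} k_ν = 0 for all μ, and the cyclic identity f_{μν} k_λ + f_{νλ} k_μ + f_{λμ} k_ν = 0 for all μ, ν, λ. Then the wave vector k is a null vector of the effective metric g^{μν} := L_F η^{μν} − 4 L_{FF} F^{μα} F_α{}^ν, i.e. ( L_F η^{μν} − 4 L_{FF} F^{μα} F_α{}^ν ) k_μ k_ν = 0. -/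
import Mathlib


open scoped BigOperators

noncomputable section

/-- The Minkowski metric η = diag(1,-1,-1,-1) (same components for η_{μν} and η^{μν}). -/
def η (μ ν : Fin 4) : ℝ := if μ = ν then (if μ = 0 then 1 else -1) else 0

set_option maxHeartbeats 4000000 in
set_option maxRecDepth 100000 in
/-- discontinuity relations of nonlinear electrodynamics L = L(F) force the
wave covector to be null in the effective metric g^{μν} = L_F η^{μν} − 4L_{FF} F^{μα}F_α{}^ν. -/
theorem nonlinear_electrodynamics_effective_null
    (F f : Fin 4 → Fin 4 → ℝ) (k : Fin 4 → ℝ) (LF LFF ξ : ℝ)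
    (hFa : ∀ μ ν, F μ ν = - F ν μ)
    (hfa : ∀ μ ν, f μ ν = - f ν μ)
    (hLF : LF ≠ 0)
    -- raised components
    (Fup fup : Fin 4 → Fin 4 → ℝ)
    (hFup : ∀ μ ν, Fup μ ν = ∑ α, ∑ b, η μ α * η ν b * F α b)
    (hfup : ∀ μ ν, fup μ ν = ∑ α, ∑ b, η μ α * η ν b * f α b)
    -- ξ := F^{αβ} f_{αβ} ≠ 0
    (hξ : ξ = ∑ α, ∑ b, Fup α b * f α b) (hξ0 : ξ ≠ 0)
    -- L_F f^{μν} k_ν + 2 L_{FF} ξ F^{μν} k_ν = 0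
    (h1 : ∀ μ, ∑ ν, (LF * fup μ ν + 2 * LFF * ξ * Fup μ ν) * k ν = 0)
    -- cyclic identity for f
    (h2 : ∀ μ ν l, f μ ν * k l + f ν l * k μ + f l μ * k ν = 0) :
    -- effective-metric null condition, with F^{μα}F_α{}^ν = η^{μρ}F_{ρα}η^{αβ}F_{βλ}η^{λν}
    ∑ μ, ∑ ν,
      (LF * η μ ν - 4 * LFF * (∑ α, Fup μ α * (∑ b, F α b * η b ν)))
        * k μ * k ν = 0 := by
  have eF00 : Fup 0 0 = F 0 0 := by simp [hFup, η, Fin.sum_univ_four]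
  have ef00 : fup 0 0 = f 0 0 := by simp [hfup, η, Fin.sum_univ_four]
  have eF01 : Fup 0 1 = -F 0 1 := by simp [hFup, η, Fin.sum_univ_four]
  have ef01 : fup 0 1 = -f 0 1 := by simp [hfup, η, Fin.sum_univ_four]
  have eF02 : Fup 0 2 = -F 0 2 := by simp [hFup, η, Fin.sum_univ_four]
  have ef02 : fup 0 2 = -f 0 2 := by simp [hfup, η, Fin.sum_univ_four]
  have eF03 : Fup 0 3 = -F 0 3 := by simp [hFup, η, Fin.sum_univ_four]
  have ef03 : fup 0 3 = -f 0 3 := by simp [hfup, η, Fin.sum_univ_four]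
  have eF10 : Fup 1 0 = -F 1 0 := by simp [hFup, η, Fin.sum_univ_four]
  have ef10 : fup 1 0 = -f 1 0 := by simp [hfup, η, Fin.sum_univ_four]
  have eF11 : Fup 1 1 = F 1 1 := by simp [hFup, η, Fin.sum_univ_four]
  have ef11 : fup 1 1 = f 1 1 := by simp [hfup, η, Fin.sum_univ_four]
  have eF12 : Fup 1 2 = F 1 2 := by simp [hFup, η, Fin.sum_univ_four]
  have ef12 : fup 1 2 = f 1 2 := by simp [hfup, η, Fin.sum_univ_four]
  have eF13 : Fup 1 3 = F 1 3 := by simp [hFup, η, Fin.sum_univ_four]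
  have ef13 : fup 1 3 = f 1 3 := by simp [hfup, η, Fin.sum_univ_four]
  have eF20 : Fup 2 0 = -F 2 0 := by simp [hFup, η, Fin.sum_univ_four]
  have ef20 : fup 2 0 = -f 2 0 := by simp [hfup, η, Fin.sum_univ_four]
  have eF21 : Fup 2 1 = F 2 1 := by simp [hFup, η, Fin.sum_univ_four]
  have ef21 : fup 2 1 = f 2 1 := by simp [hfup, η, Fin.sum_univ_four]
  have eF22 : Fup 2 2 = F 2 2 := by simp [hFup, η, Fin.sum_univ_four]
  have ef22 : fup 2 2 = f 2 2 := by simp [hfup, η, Fin.sum_univ_four]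
  have eF23 : Fup 2 3 = F 2 3 := by simp [hFup, η, Fin.sum_univ_four]
  have ef23 : fup 2 3 = f 2 3 := by simp [hfup, η, Fin.sum_univ_four]
  have eF30 : Fup 3 0 = -F 3 0 := by simp [hFup, η, Fin.sum_univ_four]
  have ef30 : fup 3 0 = -f 3 0 := by simp [hfup, η, Fin.sum_univ_four]
  have eF31 : Fup 3 1 = F 3 1 := by simp [hFup, η, Fin.sum_univ_four]
  have ef31 : fup 3 1 = f 3 1 := by simp [hfup, η, Fin.sum_univ_four]
  have eF32 : Fup 3 2 = F 3 2 := by simp [hFup, η, Fin.sum_univ_four]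
  have ef32 : fup 3 2 = f 3 2 := by simp [hfup, η, Fin.sum_univ_four]
  have eF33 : Fup 3 3 = F 3 3 := by simp [hFup, η, Fin.sum_univ_four]
  have ef33 : fup 3 3 = f 3 3 := by simp [hfup, η, Fin.sum_univ_four]
  have key : ξ * (∑ μ, ∑ ν,
      (LF * η μ ν - 4 * LFF * (∑ α, Fup μ α * (∑ b, F α b * η b ν)))
        * k μ * k ν) = 0 := by
    have h10 := h1 0
    have h11 := h1 1
    have h12 := h1 2
    have h13 := h1 3
    simp only [Fin.sum_univ_four] at h10 h11 h12 h13 hξ ⊢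
    simp only [eF00, ef00, eF01, ef01, eF02, ef02, eF03, ef03, eF10, ef10, eF11, ef11, eF12, ef12, eF13, ef13, eF20, ef20, eF21, ef21, eF22, ef22, eF23, ef23, eF30, ef30, eF31, ef31, eF32, ef32, eF33, ef33, η, Fin.reduceEq, reduceIte, if_true, if_false, Fin.isValue] at h10 h11 h12 h13 hξ ⊢
    linear_combination ((1:ℝ)*F 0 0*LF*k 0) * (h2 0 0 0) +
      ((-1:ℝ)*F 0 1*LF*k 0) * (h2 0 1 0) +
      ((-1:ℝ)*F 0 2*LF*k 0) * (h2 0 2 0) +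
      ((-1:ℝ)*F 0 3*LF*k 0) * (h2 0 3 0) +
      ((-1:ℝ)*F 1 0*LF*k 0) * (h2 1 0 0) +
      ((1:ℝ)*F 1 1*LF*k 0) * (h2 1 1 0) +
      ((1:ℝ)*F 1 2*LF*k 0) * (h2 1 2 0) +
      ((1:ℝ)*F 1 3*LF*k 0) * (h2 1 3 0) +
      ((-1:ℝ)*F 2 0*LF*k 0) * (h2 2 0 0) +
      ((1:ℝ)*F 2 1*LF*k 0) * (h2 2 1 0) +
      ((1:ℝ)*F 2 2*LF*k 0) * (h2 2 2 0) +
      ((1:ℝ)*F 2 3*LF*k 0) * (h2 2 3 0) +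
      ((-1:ℝ)*F 3 0*LF*k 0) * (h2 3 0 0) +
      ((1:ℝ)*F 3 1*LF*k 0) * (h2 3 1 0) +
      ((1:ℝ)*F 3 2*LF*k 0) * (h2 3 2 0) +
      ((1:ℝ)*F 3 3*LF*k 0) * (h2 3 3 0) +
      ((-1:ℝ)*F 0 0*LF*k 1) * (h2 0 0 1) +
      ((1:ℝ)*F 0 1*LF*k 1) * (h2 0 1 1) +
      ((1:ℝ)*F 0 2*LF*k 1) * (h2 0 2 1) +
      ((1:ℝ)*F 0 3*LF*k 1) * (h2 0 3 1) +
      ((1:ℝ)*F 1 0*LF*k 1) * (h2 1 0 1) +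
      ((-1:ℝ)*F 1 1*LF*k 1) * (h2 1 1 1) +
      ((-1:ℝ)*F 1 2*LF*k 1) * (h2 1 2 1) +
      ((-1:ℝ)*F 1 3*LF*k 1) * (h2 1 3 1) +
      ((1:ℝ)*F 2 0*LF*k 1) * (h2 2 0 1) +
      ((-1:ℝ)*F 2 1*LF*k 1) * (h2 2 1 1) +
      ((-1:ℝ)*F 2 2*LF*k 1) * (h2 2 2 1) +
      ((-1:ℝ)*F 2 3*LF*k 1) * (h2 2 3 1) +
      ((1:ℝ)*F 3 0*LF*k 1) * (h2 3 0 1) +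
      ((-1:ℝ)*F 3 1*LF*k 1) * (h2 3 1 1) +
      ((-1:ℝ)*F 3 2*LF*k 1) * (h2 3 2 1) +
      ((-1:ℝ)*F 3 3*LF*k 1) * (h2 3 3 1) +
      ((-1:ℝ)*F 0 0*LF*k 2) * (h2 0 0 2) +
      ((1:ℝ)*F 0 1*LF*k 2) * (h2 0 1 2) +
      ((1:ℝ)*F 0 2*LF*k 2) * (h2 0 2 2) +
      ((1:ℝ)*F 0 3*LF*k 2) * (h2 0 3 2) +
      ((1:ℝ)*F 1 0*LF*k 2) * (h2 1 0 2) +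
      ((-1:ℝ)*F 1 1*LF*k 2) * (h2 1 1 2) +
      ((-1:ℝ)*F 1 2*LF*k 2) * (h2 1 2 2) +
      ((-1:ℝ)*F 1 3*LF*k 2) * (h2 1 3 2) +
      ((1:ℝ)*F 2 0*LF*k 2) * (h2 2 0 2) +
      ((-1:ℝ)*F 2 1*LF*k 2) * (h2 2 1 2) +
      ((-1:ℝ)*F 2 2*LF*k 2) * (h2 2 2 2) +
      ((-1:ℝ)*F 2 3*LF*k 2) * (h2 2 3 2) +
      ((1:ℝ)*F 3 0*LF*k 2) * (h2 3 0 2) +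
      ((-1:ℝ)*F 3 1*LF*k 2) * (h2 3 1 2) +
      ((-1:ℝ)*F 3 2*LF*k 2) * (h2 3 2 2) +
      ((-1:ℝ)*F 3 3*LF*k 2) * (h2 3 3 2) +
      ((-1:ℝ)*F 0 0*LF*k 3) * (h2 0 0 3) +
      ((1:ℝ)*F 0 1*LF*k 3) * (h2 0 1 3) +
      ((1:ℝ)*F 0 2*LF*k 3) * (h2 0 2 3) +
      ((1:ℝ)*F 0 3*LF*k 3) * (h2 0 3 3) +
      ((1:ℝ)*F 1 0*LF*k 3) * (h2 1 0 3) +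
      ((-1:ℝ)*F 1 1*LF*k 3) * (h2 1 1 3) +
      ((-1:ℝ)*F 1 2*LF*k 3) * (h2 1 2 3) +
      ((-1:ℝ)*F 1 3*LF*k 3) * (h2 1 3 3) +
      ((1:ℝ)*F 2 0*LF*k 3) * (h2 2 0 3) +
      ((-1:ℝ)*F 2 1*LF*k 3) * (h2 2 1 3) +
      ((-1:ℝ)*F 2 2*LF*k 3) * (h2 2 2 3) +
      ((-1:ℝ)*F 2 3*LF*k 3) * (h2 2 3 3) +
      ((1:ℝ)*F 3 0*LF*k 3) * (h2 3 0 3) +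
      ((-1:ℝ)*F 3 1*LF*k 3) * (h2 3 1 3) +
      ((-1:ℝ)*F 3 2*LF*k 3) * (h2 3 2 3) +
      ((-1:ℝ)*F 3 3*LF*k 3) * (h2 3 3 3) +
      ((-2:ℝ)*F 0 0*k 0) * h10 +
      ((-2:ℝ)*F 0 1*k 0) * h11 +
      ((-2:ℝ)*F 0 2*k 0) * h12 +
      ((-2:ℝ)*F 0 3*k 0) * h13 +
      ((2:ℝ)*F 1 0*k 1) * h10 +
      ((2:ℝ)*F 1 1*k 1) * h11 +
      ((2:ℝ)*F 1 2*k 1) * h12 +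
      ((2:ℝ)*F 1 3*k 1) * h13 +
      ((2:ℝ)*F 2 0*k 2) * h10 +
      ((2:ℝ)*F 2 1*k 2) * h11 +
      ((2:ℝ)*F 2 2*k 2) * h12 +
      ((2:ℝ)*F 2 3*k 2) * h13 +
      ((2:ℝ)*F 3 0*k 3) * h10 +
      ((2:ℝ)*F 3 1*k 3) * h11 +
      ((2:ℝ)*F 3 2*k 3) * h12 +
      ((2:ℝ)*F 3 3*k 3) * h13 +
      ((1:ℝ)*LF*k 0*k 0 + (-1:ℝ)*LF*k 1*k 1 + (-1:ℝ)*LF*k 2*k 2 + (-1:ℝ)*LF*k 3*k 3) * hξ +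
      ((-1/2:ℝ)*LF*f 0 1*k 0*k 1 + (-1/2:ℝ)*LF*f 0 2*k 0*k 2 + (-1/2:ℝ)*LF*f 0 3*k 0*k 3 + (1/2:ℝ)*LF*f 1 0*k 0*k 1 + (1/2:ℝ)*LF*f 2 0*k 0*k 2 + (1/2:ℝ)*LF*f 3 0*k 0*k 3) * (hFa 0 0) +
      ((1:ℝ)*LF*f 0 1*k 0*k 0 + (1:ℝ)*LF*f 0 1*k 1*k 1 + (1:ℝ)*LF*f 0 2*k 1*k 2 + (1:ℝ)*LF*f 0 3*k 1*k 3 + (-1:ℝ)*LF*f 1 1*k 0*k 1 + (-1:ℝ)*LF*f 2 1*k 0*k 2 + (-1:ℝ)*LF*f 3 1*k 0*k 3) * (hFa 1 0) +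
      ((-1:ℝ)*LF*f 0 1*k 0*k 1 + (-1/2:ℝ)*LF*f 1 2*k 1*k 2 + (-1/2:ℝ)*LF*f 1 3*k 1*k 3 + (1/2:ℝ)*LF*f 2 1*k 1*k 2 + (1/2:ℝ)*LF*f 3 1*k 1*k 3) * (hFa 1 1) +
      ((1:ℝ)*LF*f 0 1*k 1*k 2 + (1:ℝ)*LF*f 0 2*k 0*k 0 + (1:ℝ)*LF*f 0 2*k 2*k 2 + (1:ℝ)*LF*f 0 3*k 2*k 3 + (-1:ℝ)*LF*f 1 2*k 0*k 1 + (-1:ℝ)*LF*f 2 2*k 0*k 2 + (-1:ℝ)*LF*f 3 2*k 0*k 3) * (hFa 2 0) +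
      ((-1:ℝ)*LF*f 0 1*k 0*k 2 + (-1:ℝ)*LF*f 0 2*k 0*k 1 + (1:ℝ)*LF*f 1 2*k 1*k 1 + (-1:ℝ)*LF*f 1 2*k 2*k 2 + (-1:ℝ)*LF*f 1 3*k 2*k 3 + (1:ℝ)*LF*f 2 2*k 1*k 2 + (1:ℝ)*LF*f 3 2*k 1*k 3) * (hFa 2 1) +
      ((-1:ℝ)*LF*f 0 2*k 0*k 2 + (1:ℝ)*LF*f 1 2*k 1*k 2 + (-1/2:ℝ)*LF*f 2 3*k 2*k 3 + (1/2:ℝ)*LF*f 3 2*k 2*k 3) * (hFa 2 2) +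
      ((1:ℝ)*LF*f 0 1*k 1*k 3 + (1:ℝ)*LF*f 0 2*k 2*k 3 + (1:ℝ)*LF*f 0 3*k 0*k 0 + (1:ℝ)*LF*f 0 3*k 3*k 3 + (-1:ℝ)*LF*f 1 3*k 0*k 1 + (-1:ℝ)*LF*f 2 3*k 0*k 2 + (-1:ℝ)*LF*f 3 3*k 0*k 3) * (hFa 3 0) +
      ((-1:ℝ)*LF*f 0 1*k 0*k 3 + (-1:ℝ)*LF*f 0 3*k 0*k 1 + (-1:ℝ)*LF*f 1 2*k 2*k 3 + (1:ℝ)*LF*f 1 3*k 1*k 1 + (-1:ℝ)*LF*f 1 3*k 3*k 3 + (1:ℝ)*LF*f 2 3*k 1*k 2 + (1:ℝ)*LF*f 3 3*k 1*k 3) * (hFa 3 1) +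
      ((-1:ℝ)*LF*f 0 2*k 0*k 3 + (-1:ℝ)*LF*f 0 3*k 0*k 2 + (1:ℝ)*LF*f 1 2*k 1*k 3 + (1:ℝ)*LF*f 1 3*k 1*k 2 + (1:ℝ)*LF*f 2 3*k 2*k 2 + (-1:ℝ)*LF*f 2 3*k 3*k 3 + (1:ℝ)*LF*f 3 3*k 2*k 3) * (hFa 3 2) +
      ((-1:ℝ)*LF*f 0 3*k 0*k 3 + (1:ℝ)*LF*f 1 3*k 1*k 3 + (1:ℝ)*LF*f 2 3*k 2*k 3) * (hFa 3 3) +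
      ((1/2:ℝ)*F 0 1*LF*k 0*k 1 + (1/2:ℝ)*F 0 2*LF*k 0*k 2 + (1/2:ℝ)*F 0 3*LF*k 0*k 3 + (-1/2:ℝ)*F 1 0*LF*k 0*k 1 + (-1/2:ℝ)*F 2 0*LF*k 0*k 2 + (-1/2:ℝ)*F 3 0*LF*k 0*k 3) * (hfa 0 0) +
      ((-1:ℝ)*F 0 1*LF*k 0*k 0 + (-1:ℝ)*F 0 1*LF*k 1*k 1 + (-1:ℝ)*F 0 2*LF*k 1*k 2 + (-1:ℝ)*F 0 3*LF*k 1*k 3 + (1:ℝ)*F 1 1*LF*k 0*k 1 + (1:ℝ)*F 2 1*LF*k 0*k 2 + (1:ℝ)*F 3 1*LF*k 0*k 3) * (hfa 1 0) +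
      ((1:ℝ)*F 0 1*LF*k 0*k 1 + (1/2:ℝ)*F 1 2*LF*k 1*k 2 + (1/2:ℝ)*F 1 3*LF*k 1*k 3 + (-1/2:ℝ)*F 2 1*LF*k 1*k 2 + (-1/2:ℝ)*F 3 1*LF*k 1*k 3) * (hfa 1 1) +
      ((-1:ℝ)*F 0 1*LF*k 1*k 2 + (-1:ℝ)*F 0 2*LF*k 0*k 0 + (-1:ℝ)*F 0 2*LF*k 2*k 2 + (-1:ℝ)*F 0 3*LF*k 2*k 3 + (1:ℝ)*F 1 2*LF*k 0*k 1 + (1:ℝ)*F 2 2*LF*k 0*k 2 + (1:ℝ)*F 3 2*LF*k 0*k 3) * (hfa 2 0) +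
      ((1:ℝ)*F 0 1*LF*k 0*k 2 + (1:ℝ)*F 0 2*LF*k 0*k 1 + (-1:ℝ)*F 1 2*LF*k 1*k 1 + (1:ℝ)*F 1 2*LF*k 2*k 2 + (1:ℝ)*F 1 3*LF*k 2*k 3 + (-1:ℝ)*F 2 2*LF*k 1*k 2 + (-1:ℝ)*F 3 2*LF*k 1*k 3) * (hfa 2 1) +
      ((1:ℝ)*F 0 2*LF*k 0*k 2 + (-1:ℝ)*F 1 2*LF*k 1*k 2 + (1/2:ℝ)*F 2 3*LF*k 2*k 3 + (-1/2:ℝ)*F 3 2*LF*k 2*k 3) * (hfa 2 2) +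
      ((-1:ℝ)*F 0 1*LF*k 1*k 3 + (-1:ℝ)*F 0 2*LF*k 2*k 3 + (-1:ℝ)*F 0 3*LF*k 0*k 0 + (-1:ℝ)*F 0 3*LF*k 3*k 3 + (1:ℝ)*F 1 3*LF*k 0*k 1 + (1:ℝ)*F 2 3*LF*k 0*k 2 + (1:ℝ)*F 3 3*LF*k 0*k 3) * (hfa 3 0) +
      ((1:ℝ)*F 0 1*LF*k 0*k 3 + (1:ℝ)*F 0 3*LF*k 0*k 1 + (1:ℝ)*F 1 2*LF*k 2*k 3 + (-1:ℝ)*F 1 3*LF*k 1*k 1 + (1:ℝ)*F 1 3*LF*k 3*k 3 + (-1:ℝ)*F 2 3*LF*k 1*k 2 + (-1:ℝ)*F 3 3*LF*k 1*k 3) * (hfa 3 1) +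
      ((1:ℝ)*F 0 2*LF*k 0*k 3 + (1:ℝ)*F 0 3*LF*k 0*k 2 + (-1:ℝ)*F 1 2*LF*k 1*k 3 + (-1:ℝ)*F 1 3*LF*k 1*k 2 + (-1:ℝ)*F 2 3*LF*k 2*k 2 + (1:ℝ)*F 2 3*LF*k 3*k 3 + (-1:ℝ)*F 3 3*LF*k 2*k 3) * (hfa 3 2) +
      ((1:ℝ)*F 0 3*LF*k 0*k 3 + (-1:ℝ)*F 1 3*LF*k 1*k 3 + (-1:ℝ)*F 2 3*LF*k 2*k 3) * (hfa 3 3)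
  rcases mul_eq_zero.mp key with h | h
  · exact absurd h hξ0
  · exact h
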